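/- Let R > 0 and 0 < δ < 1 be real numbers, and let a : ℝ → ℝ satisfy a'(t) = R · a(t) · (a(t) - δ) · (1 - a(t)) for all t ≥ 0 (in the sense of HasDerivAt), with 0 < a(0) < δ. Then a(t) tends to 0 as t → ∞ (Tendsto a atTop (𝓝 0)). -/

import Mathlib

open Filter Topology Set

theorem Dgate_converges_to_zero
    (R δ : ℝ) (hR : 0 < R) (hδ0 : 0 < δ) (hδ1 : δ < 1)
    (a : ℝ → ℝ)
    (ha : ∀ t : ℝ, 0 ≤ t → HasDerivAt a (R * a t * (a t - δ) * (1 - a t)) t)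
    (h0 : 0 < a 0) (h0' : a 0 < δ) :
    Tendsto a atTop (𝓝 0) := by
  set f : ℝ → ℝ := fun x => R * x * (x - δ) * (1 - x) with hf_def
  have h8 : (0:ℝ) ≤ 8 * R := by positivity
  -- f is Lipschitz on Icc 0 δ
  have hlip : LipschitzOnWith (Real.toNNReal (8 * R)) f (Icc 0 δ) := by
    apply (convex_Icc (0:ℝ) δ).lipschitzOnWith_of_nnnorm_hasDerivWithin_le
      (f' := fun x => R * ((x - δ) * (1 - x) + x * (1 - x) - x * (x - δ)))
    · intro x hx
      have h : HasDerivAt f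
          (R * ((x - δ) * (1 - x) + x * (1 - x) - x * (x - δ))) x := by
        have := (((hasDerivAt_id x).const_mul R).mul ((hasDerivAt_id x).sub_const δ)).mul
          ((hasDerivAt_const x (1:ℝ)).sub (hasDerivAt_id x))
        convert this using 1
        · rfl
        · rfl
        · rfl
        simp only [id, Pi.sub_apply, Pi.mul_apply]
        ring
      exact h.hasDerivWithinAt
    · intro x hx
      obtain ⟨hx0, hxδ⟩ := hx
      have hx1 : x ≤ 1 := hxδ.trans hδ1.le
      have h1 : R * (x * x) ≤ R * 1 := by
        apply mul_le_mul_of_nonneg_left _ hR.le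
        nlinarith
      have h2 : R * x ≤ R * 1 := by nlinarith
      have h3 : R * δ ≤ R * 1 := by nlinarith
      have h4 : R * (δ * x) ≤ R * 1 := by nlinarith
      have h5 : 0 ≤ R * x := by positivity
      have h6 : 0 ≤ R * δ := by positivity
      have h7 : 0 ≤ R * (x * x) := by positivity
      have h9 : 0 ≤ R * (δ * x) := by positivity
      rw [← NNReal.coe_le_coe, coe_nnnorm, Real.norm_eq_abs, Real.coe_toNNReal _ h8, abs_le]
      constructor <;> nlinarith
  -- f is strictly negative on (0, δ)
  have hfneg : ∀ x ∈ Ioo (0:ℝ) δ, f x < 0 := by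
    intro x hx
    have hx1 : 0 < 1 - x := by
      have := hx.2
      linarith
    have : f x = R * x * (x - δ) * (1 - x) := rfl
    rw [this]
    have h1 : 0 < R * x := mul_pos hR hx.1
    have h2 : x - δ < 0 := by linarith [hx.2]
    exact mul_neg_of_neg_of_pos (mul_neg_of_pos_of_neg h1 h2) hx1
  -- invariance: a stays in (0, δ) for t ≥ 0
  have hbound : ∀ t, 0 ≤ t → a t ∈ Ioo 0 δ := by
    by_contra hcon
    push_neg at hcon
    obtain ⟨t1', ht1'0, ht1'⟩ := hcon
    set B : Set ℝ := {t | 0 ≤ t ∧ a t ∉ Ioo 0 δ} with hB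
    have hBne : B.Nonempty := ⟨t1', ht1'0, ht1'⟩
    have hBbd : BddBelow B := ⟨0, fun t ht => ht.1⟩
    set t1 := sInf B with ht1_def
    have ht1_0 : 0 ≤ t1 := le_csInf hBne fun t ht => ht.1
    have hgood : ∀ t, 0 ≤ t → t < t1 → a t ∈ Ioo 0 δ := by
      intro t ht0 htlt
      by_contra h
      exact absurd (csInf_le hBbd ⟨ht0, h⟩) (not_le.mpr htlt)
    have hcont1 : ContinuousAt a t1 := (ha t1 ht1_0).continuousAt
    have ht1mem : a t1 ∈ Icc 0 δ := by
      rcases eq_or_lt_of_le ht1_0 with h | h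
      · exact Ioo_subset_Icc_self (h ▸ ⟨h0, h0'⟩)
      · have hev : ∀ᶠ t in 𝓝[<] t1, a t ∈ Icc 0 δ := by
          filter_upwards [Ioo_mem_nhdsLT_of_mem (⟨h, le_rfl⟩ : t1 ∈ Ioc 0 t1)] with t ht
          exact Ioo_subset_Icc_self (hgood t ht.1.le ht.2)
        exact isClosed_Icc.mem_of_tendsto (hcont1.continuousWithinAt :
          Tendsto a (𝓝[<] t1) (𝓝 (a t1))) hev
    have hnotin : a t1 ∉ Ioo 0 δ := by
      intro hin
      have hev : ∀ᶠ t in 𝓝 t1, a t ∈ Ioo 0 δ := hcont1 (isOpen_Ioo.mem_nhds hin)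
      obtain ⟨ε, hε, hball⟩ := Metric.eventually_nhds_iff.mp hev
      obtain ⟨tb, htbB, htblt⟩ := (csInf_lt_iff hBbd hBne).mp
        (show sInf B < t1 + ε by rw [← ht1_def]; linarith)
      have htb_ge : t1 ≤ tb := csInf_le hBbd htbB
      have : dist tb t1 < ε := by
        rw [Real.dist_eq, abs_of_nonneg (by linarith)]
        linarith
      exact htbB.2 (hball this)
    have hcase : a t1 = 0 ∨ a t1 = δ := by
      rcases eq_or_lt_of_le ht1mem.1 with h | h
      · exact Or.inl h.symm
      · rcases eq_or_lt_of_le ht1mem.2 with h' | h'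
        · exact Or.inr h'
        · exact absurd ⟨h, h'⟩ hnotin
    have ht1_pos : 0 < t1 := by
      rcases eq_or_lt_of_le ht1_0 with h | h
      · exfalso
        rcases hcase with hc | hc
        · rw [← h] at hc; linarith
        · rw [← h] at hc; linarith
      · exact h
    have hc0 : f (a t1) = 0 := by
      rcases hcase with h | h <;> rw [h] <;> simp only [hf_def] <;> ring
    have key : EqOn a (fun _ => a t1) (Icc 0 t1) := by
      apply ODE_solution_unique_of_mem_Icc_left (v := fun _ x => f x)
        (s := fun _ => Icc (0:ℝ) δ) (K := Real.toNNReal (8 * R)) (fun _ _ => hlip)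
      · exact fun t ht => ((ha t ht.1).continuousAt).continuousWithinAt
      · exact fun t ht => ((ha t ht.1.le).hasDerivWithinAt)
      · intro t ht
        rcases eq_or_lt_of_le ht.2 with h | h
        · rw [h]; exact ht1mem
        · exact Ioo_subset_Icc_self (hgood t ht.1.le h)
      · exact continuousOn_const
      · intro t ht
        have := hasDerivWithinAt_const t (Iic t) (a t1)
        simpa [hc0] using this
      · exact fun t ht => ht1mem
      · rfl
    have h00 : a 0 = a t1 := key ⟨le_refl 0, ht1_0⟩
    rcases hcase with h | h
    · rw [h] at h00; linarith
    · rw [h] at h00; linarith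
  -- a is antitone on [0, ∞)
  have hanti : AntitoneOn a (Ici 0) := by
    apply antitoneOn_of_deriv_nonpos (convex_Ici 0)
    · exact fun t ht => (ha t ht).continuousAt.continuousWithinAt
    · intro t ht
      rw [interior_Ici] at ht
      exact (ha t ht.le).differentiableAt.differentiableWithinAt
    · intro t ht
      rw [interior_Ici] at ht
      rw [(ha t ht.le).deriv]
      exact (hfneg _ (hbound t ht.le)).le
  -- the limit
  set b : ℝ → ℝ := fun t => a (max t 0) with hb_def
  have hb_anti : Antitone b := fun s t hst =>
    hanti (le_max_right s 0) (le_max_right t 0) (max_le_max hst le_rfl)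
  have hb_bdd : BddBelow (range b) := by
    refine ⟨0, ?_⟩
    rintro _ ⟨t, rfl⟩
    exact (hbound _ (le_max_right t 0)).1.le
  have htend : Tendsto b atTop (𝓝 (⨅ t, b t)) := tendsto_atTop_ciInf hb_anti hb_bdd
  set L := ⨅ t, b t with hL_def
  have hL0 : 0 ≤ L := le_ciInf fun t => (hbound _ (le_max_right t 0)).1.le
  have hLle : ∀ t, 0 ≤ t → L ≤ a t := by
    intro t ht
    have := ciInf_le hb_bdd t
    simpa [hb_def, max_eq_left ht] using this
  have haeq : b =ᶠ[atTop] a := by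
    filter_upwards [eventually_ge_atTop (0:ℝ)] with t ht
    simp [hb_def, max_eq_left ht]
  have hL_eq : L = 0 := by
    by_contra hne
    have hLpos : 0 < L := lt_of_le_of_ne hL0 (Ne.symm hne)
    have hLa0 : L ≤ a 0 := hLle 0 le_rfl
    have hsub : Icc L (a 0) ⊆ Ioo 0 δ := fun x hx => ⟨lt_of_lt_of_le hLpos hx.1,
      lt_of_le_of_lt hx.2 h0'⟩
    have hfc : ContinuousOn f (Icc L (a 0)) := by
      apply Continuous.continuousOn
      fun_prop
    obtain ⟨x0, hx0mem, hx0max⟩ := isCompact_Icc.exists_isMaxOn ⟨L, le_rfl, hLa0⟩ hfc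
    set c := -f x0 with hc_def
    have hc_pos : 0 < c := by
      have := hfneg x0 (hsub hx0mem)
      linarith
    have hmax : ∀ t, 0 ≤ t → f (a t) ≤ -c := by
      intro t ht
      have hmem : a t ∈ Icc L (a 0) := ⟨hLle t ht, hanti self_mem_Ici ht ht⟩
      have := hx0max hmem
      simpa [hc_def] using this
    -- g t = a t + c * t is antitone on [0, ∞)
    have hg_anti : AntitoneOn (fun t => a t + c * t) (Ici 0) := by
      apply antitoneOn_of_deriv_nonpos (convex_Ici 0)
      · apply ContinuousOn.add
        · exact fun t ht => (ha t ht).continuousAt.continuousWithinAt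
        · fun_prop
      · intro t ht
        rw [interior_Ici] at ht
        exact ((ha t ht.le).add ((hasDerivAt_id t).const_mul c)).differentiableAt.differentiableWithinAt
      · intro t ht
        rw [interior_Ici] at ht
        have hd : HasDerivAt (fun t => a t + c * t) (R * a t * (a t - δ) * (1 - a t) + c * 1) t :=
          (ha t ht.le).add ((hasDerivAt_id t).const_mul c)
        rw [hd.deriv]
        have := hmax t ht.le
        simp only [hf_def] at this
        linarith
    set T := (a 0 - L) / c + 1 with hT_def
    have hT_pos : 0 < T := by
      have h' : 0 ≤ (a 0 - L) / c := div_nonneg (by linarith) hc_pos.le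
      rw [hT_def]
      linarith
    have hgT : a T + c * T ≤ a 0 + c * 0 := hg_anti self_mem_Ici hT_pos.le hT_pos.le
    have hcT : c * T = a 0 - L + c := by
      rw [hT_def]
      field_simp
    have : a T ≤ L - c := by
      rw [hcT] at hgT
      linarith
    have := hLle T hT_pos.le
    linarith
  rw [hL_eq] at htend
  exact htend.congr' haeq
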